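/- Let A be an abelian group, G = Aut(A) its automorphism group acting on A naturally by g·a = g(a), and let q be an integer such that multiplication by q is an automorphism of A. Then (q − 1)² annihilates H²(G, A), i.e., (q−1)²·x = 0 for every x ∈ H²(G, A). -/

import Mathlib

/-- The natural representation of `G = Aut(A)` on the abelian group `A`, given by
`g · a = g(a)`. -/
noncomputable def natRep (A : Type) [AddCommGroup A] : Representation ℤ (Multiplicative (AddAut A)) A where
  toFun g := AddMonoidHom.toIntLinearMap (AddEquiv.toAddMonoidHom (Multiplicative.toAdd g))
  map_one' := by ext a; rfl
  map_mul' g h := by ext a; rfl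

open groupCohomology in
/-- Let `A` be an abelian group, `G = Aut(A)` acting naturally on `A`,
and `q` an integer such that multiplication by `q` is an automorphism of `A`. Then
`(q - 1)²` annihilates `H²(G, A)`. -/
theorem sub_one_sq_annihilates_H2_natural (A : Type) [AddCommGroup A] (q : ℤ)
    (hq : Function.Bijective fun a : A => q • a) :
    ∀ x : H2 (Rep.of (natRep A)), (q - 1) ^ 2 • x = 0 := by
  intro x
  -- the multiplication-by-`q` automorphism
  let c : Multiplicative (AddAut A) := Multiplicative.ofAdd
    (AddEquiv.ofBijective (AddMonoidHom.mk' (fun a => q • a) fun a b => smul_add q a b) hq)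
  have hc : ∀ a : A, (Multiplicative.toAdd c) a = q • a := fun a => rfl
  have hcen : ∀ g : Multiplicative (AddAut A), c * g = g * c := by
    intro g
    show Multiplicative.ofAdd (Multiplicative.toAdd c + Multiplicative.toAdd g) =
      Multiplicative.ofAdd (Multiplicative.toAdd g + Multiplicative.toAdd c)
    congr 1
    ext a
    show Multiplicative.toAdd c (Multiplicative.toAdd g a) =
      Multiplicative.toAdd g (Multiplicative.toAdd c a)
    rw [hc, hc, map_zsmul]
  induction x using H2_induction_on with | h f =>
  rw [← map_zsmul, H2π_eq_zero_iff]
  change ((q - 1) ^ 2 : ℤ) • (f : Multiplicative (AddAut A) × Multiplicative (AddAut A) → A) ∈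
    coboundaries₂ (Rep.of (natRep A))
  have key : (q - 1) • (f : Multiplicative (AddAut A) × Multiplicative (AddAut A) → A) ∈
      coboundaries₂ (Rep.of (natRep A)) := by
    refine ⟨fun g => f (c, g) - f (g, c), ?_⟩
    ext ⟨g, h⟩
    have hf := (mem_cocycles₂_iff (A := Rep.of (natRep A)) (f : _ × _ → _)).1 f.2
    have hρ : ∀ (g : Multiplicative (AddAut A)) (y : A), (Rep.of (natRep A)).ρ g y =
        Multiplicative.toAdd g y := fun _ _ => rfl
    have hρc : ∀ y : A, (Rep.of (natRep A)).ρ c y = q • y := fun y => rfl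
    have h1 := hf g h c
    have h2 := hf g c h
    have h3 := hf c g h
    rw [← hcen h] at h1
    rw [← hcen g] at h2
    rw [hρc] at h3
    have e1 : (Rep.of (natRep A)).ρ g (f (h, c)) =
        f (g * h, c) + f (g, h) - f (g, c * h) := eq_sub_of_add_eq h1.symm
    have e2 : (Rep.of (natRep A)).ρ g (f (c, h)) =
        f (c * g, h) + f (g, c) - f (g, c * h) := eq_sub_of_add_eq h2.symm
    have e3 : f (c, g * h) = f (c * g, h) + f (c, g) - q • f (g, h) := by
      rw [eq_sub_iff_add_eq, add_comm, h3]
    show (Rep.of (natRep A)).ρ g (f (c, h) - f (h, c)) -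
        (f (c, g * h) - f (g * h, c)) + (f (c, g) - f (g, c)) =
        ((q - 1 : ℤ) • (f : Multiplicative (AddAut A) × Multiplicative (AddAut A) → A)) (g, h)
    have hsmul : ((q - 1 : ℤ) • (f : Multiplicative (AddAut A) × Multiplicative (AddAut A) → A))
        (g, h) = (q - 1 : ℤ) • f (g, h) := rfl
    rw [hsmul, map_sub, e1, e2, e3, sub_smul, one_smul]
    abel
  have hsq : ((q - 1) ^ 2 : ℤ) • (f : Multiplicative (AddAut A) × Multiplicative (AddAut A) → A) =
      (q - 1) • ((q - 1) • (f : Multiplicative (AddAut A) × Multiplicative (AddAut A) → A)) := by rw [smul_smul, ← pow_two]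
  rw [hsq]
  exact Submodule.smul_mem _ _ key
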